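/- If G is a finite non-nilpotent group, then there exists an abnormal maximal subgroup M of G such that F̃(G) is not contained in M. -/

import Mathlib

open scoped Pointwise

section Defs

variable {G : Type*} [Group G]

/-- The conjugate `H^x = x⁻¹ H x` of a subgroup `H` of `G`. -/
def conjS (x : G) (H : Subgroup G) : Subgroup G :=
  H.map (MulAut.conj x⁻¹).toMonoidHom

/-- A subgroup `H` of `G` is `R`-conjugate-permutable (for a subset `R ⊆ G`) if
`H · H^x = H^x · H` as subsets of `G`, for all `x ∈ R`. -/
def IsRCP (R : Set G) (H : Subgroup G) : Prop :=
  ∀ x ∈ R, (H : Set G) * (conjS x H : Set G) = (conjS x H : Set G) * (H : Set G)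

/-- A subgroup `H` of `G` is conjugate-permutable if `H · H^x = H^x · H` for all `x ∈ G`. -/
def IsConjPermutable (H : Subgroup G) : Prop :=
  IsRCP (Set.univ : Set G) H

/-- `N` is a minimal normal subgroup of `G`. -/
def IsMinimalNormal (N : Subgroup G) : Prop :=
  N.Normal ∧ N ≠ ⊥ ∧ ∀ K : Subgroup G, K.Normal → K ≤ N → K = ⊥ ∨ K = N

/-- `H` is an abnormal subgroup of `G`: `x ∈ ⟨H, H^x⟩` for all `x ∈ G`. -/
def IsAbnormal (H : Subgroup G) : Prop :=
  ∀ x : G, x ∈ H ⊔ conjS x H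

/-- `H` is normal in the subgroup `K` of `G`. -/
def IsNormalIn (H K : Subgroup G) : Prop :=
  H ≤ K ∧ ∀ x ∈ K, ∀ h ∈ H, x * h * x⁻¹ ∈ H

/-- `H` is subnormal in the subgroup `K`: there is a chain
`H = H₀ ◁ H₁ ◁ ⋯ ◁ Hₙ = K` with each term normal in the next. -/
def IsSubnormalIn (H K : Subgroup G) : Prop :=
  ∃ (n : ℕ) (s : Fin (n + 1) → Subgroup G),
    s 0 = H ∧ s (Fin.last n) = K ∧
    ∀ i : Fin n, s i.castSucc ≤ s i.succ ∧
      ∀ x ∈ s i.succ, ∀ h ∈ s i.castSucc, x * h * x⁻¹ ∈ s i.castSucc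

/-- `H` is pronormal in the subgroup `K`: for every `x ∈ K`, the subgroups `H` and `H^x`
are conjugate in `⟨H, H^x⟩`. -/
def IsPronormalIn (H K : Subgroup G) : Prop :=
  H ≤ K ∧ ∀ x ∈ K, ∃ k ∈ H ⊔ conjS x H, conjS k H = conjS x H

end Defs

/-- The socle of `G`: the subgroup generated by all minimal normal subgroups of `G`. -/
def socle' (G : Type*) [Group G] : Subgroup G :=
  sSup {N : Subgroup G | IsMinimalNormal N}

/-- `F̃(G)`: the subgroup of `G` containing the Frattini subgroup `Φ(G)` with
`F̃(G)/Φ(G) = Soc(G/Φ(G))`. -/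
def Ftilde (G : Type*) [Group G] : Subgroup G :=
  (socle' (G ⧸ frattini G)).comap (QuotientGroup.mk' (frattini G))

/-- The Fitting subgroup `F(G)`: the largest normal nilpotent subgroup of `G`
(the subgroup generated by all normal nilpotent subgroups). -/
def Fitting (G : Type*) [Group G] : Subgroup G :=
  sSup {N : Subgroup G | N.Normal ∧ Group.IsNilpotent N}

section FittingNormal

variable {G : Type*} [Group G]

lemma map_conj_eq_self {N : Subgroup G} (hN : N.Normal) (g : G) :
    N.map (MulAut.conj g).toMonoidHom = N := by
  ext x
  simp only [Subgroup.mem_map, MulEquiv.coe_toMonoidHom, MulAut.conj_apply]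
  constructor
  · rintro ⟨n, hn, rfl⟩; exact hN.conj_mem n hn g
  · intro hx
    refine ⟨g⁻¹ * x * g, by simpa using hN.conj_mem x hx g⁻¹, by group⟩

instance Fitting_normal (G : Type*) [Group G] : (Fitting G).Normal := by
  constructor
  intro n hn g
  have h1 : (Fitting G).map (MulAut.conj g).toMonoidHom = Fitting G := by
    unfold Fitting
    rw [sSup_eq_iSup, Subgroup.map_iSup]
    refine iSup_congr fun N => ?_
    rw [Subgroup.map_iSup]
    exact iSup_congr_Prop Iff.rfl fun hN => map_conj_eq_self hN.1 g
  rw [← h1]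
  exact Subgroup.mem_map.2 ⟨n, hn, rfl⟩

end FittingNormal

/-- The generalized Fitting subgroup `F*(G)`: the subgroup containing `F(G)` with
`F*(G)/F(G) = Soc(C_G(F(G))·F(G)/F(G))`. -/
def FStar (G : Type*) [Group G] : Subgroup G :=
  Subgroup.comap (QuotientGroup.mk' (Fitting G))
    (Subgroup.map
      ((Subgroup.centralizer (Fitting G : Set G) ⊔ Fitting G).map
          (QuotientGroup.mk' (Fitting G))).subtype
      (socle' ((Subgroup.centralizer (Fitting G : Set G) ⊔ Fitting G).map
          (QuotientGroup.mk' (Fitting G)))))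

/-- A group is supersoluble if it has a normal series all of whose terms are
normal in the whole group and all of whose factors are cyclic; the factor
`s (i+1) / s i` being cyclic is expressed by `s (i+1) ≤ s i ⊔ ⟨g⟩` for some `g`. -/
def IsSupersoluble (G : Type*) [Group G] : Prop :=
  ∃ (n : ℕ) (s : Fin (n + 1) → Subgroup G),
    Monotone s ∧ s 0 = ⊥ ∧ s (Fin.last n) = ⊤ ∧ (∀ i, (s i).Normal) ∧
    ∀ i : Fin n, ∃ g : G, s i.succ ≤ s i.castSucc ⊔ Subgroup.zpowers g

/-- A group is metanilpotent if it has a normal nilpotent subgroup with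
nilpotent quotient. -/
def IsMetanilpotent (G : Type*) [Group G] : Prop :=
  ∃ (N : Subgroup G) (hN : N.Normal),
    Group.IsNilpotent N ∧
      @Group.IsNilpotent (G ⧸ N) (@QuotientGroup.Quotient.group G _ N hN)


section Aux1
variable {G : Type*} [Group G]

lemma mem_conjS {x y : G} {H : Subgroup G} : y ∈ conjS x H ↔ x * y * x⁻¹ ∈ H := by
  simp only [conjS, Subgroup.mem_map, MulEquiv.coe_toMonoidHom, MulAut.conj_apply]
  constructor
  · rintro ⟨h, hh, rfl⟩
    have heq : x * (x⁻¹ * h * x⁻¹⁻¹) * x⁻¹ = h := by group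
    rwa [heq]
  · intro hy
    exact ⟨x * y * x⁻¹, hy, by group⟩

lemma card_conjS [Finite G] (x : G) (H : Subgroup G) :
    Nat.card (conjS x H) = Nat.card H := by
  unfold conjS
  exact (Nat.card_congr (H.equivMapOfInjective _ (MulAut.conj x⁻¹).injective).toEquiv).symm

lemma isAbnormal_of_coatom_not_normal [Finite G] {M : Subgroup G}
    (hM : IsCoatom M) (hn : ¬ M.Normal) : IsAbnormal M := by
  intro x
  by_cases hc : conjS x M = M
  · have hxn : x ∈ Subgroup.normalizer (M : Set G) := by
      rw [Subgroup.mem_normalizer_iff]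
      intro h
      constructor
      · intro hh
        have : h ∈ conjS x M := hc.symm ▸ hh
        exact mem_conjS.mp this
      · intro hh
        have h2 : h ∈ conjS x M := mem_conjS.mpr hh
        exact hc ▸ h2
    have hne : Subgroup.normalizer (M : Set G) ≠ ⊤ := fun ht => hn (Subgroup.normalizer_eq_top_iff.mp ht)
    have heq : Subgroup.normalizer (M : Set G) = M := by
      rcases lt_or_eq_of_le M.le_normalizer with hlt | heq
      · exact absurd (hM.2 _ hlt) hne
      · exact heq.symm
    exact Subgroup.mem_sup_left (heq ▸ hxn)
  · have hlt : M < M ⊔ conjS x M := by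
      rcases (le_sup_left : M ≤ M ⊔ conjS x M).lt_or_eq with hlt | heq
      · exact hlt
      · exfalso
        have hle : conjS x M ≤ M := le_sup_right.trans heq.ge
        exact hc (Subgroup.eq_of_le_of_card_ge hle (card_conjS x M).ge)
    rw [hM.2 _ hlt]
    exact Subgroup.mem_top x

lemma exists_isMinimalNormal [Finite G] [Nontrivial G] :
    ∃ N : Subgroup G, IsMinimalNormal N := by
  obtain ⟨N, hN, hmin⟩ := Set.Finite.exists_minimalFor id
    {N : Subgroup G | N.Normal ∧ N ≠ ⊥} (Set.toFinite _)
    ⟨⊤, ⟨inferInstance, top_ne_bot⟩⟩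
  refine ⟨N, hN.1, hN.2, fun K hKn hKle => ?_⟩
  by_cases hK : K = ⊥
  · exact Or.inl hK
  · exact Or.inr (le_antisymm hKle (hmin (show K ∈ {N : Subgroup G | N.Normal ∧ N ≠ ⊥} from ⟨hKn, hK⟩) hKle))

lemma exists_coatom_not_le [Finite G] {N : Subgroup G} (hN : ¬ N ≤ frattini G) :
    ∃ M : Subgroup G, IsCoatom M ∧ ¬ N ≤ M := by
  by_contra hcon
  push_neg at hcon
  apply hN
  unfold frattini Order.radical
  exact le_iInf₂ fun M hM => hcon M hM

end Aux1

section Aux2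
variable {G : Type*} [Group G]

lemma comm_of_subgroups_trivial {Q : Type*} [Group Q]
    (hs : ∀ K : Subgroup Q, K = ⊥ ∨ K = ⊤) (a b : Q) : a * b = b * a := by
  rcases hs (Subgroup.zpowers a) with hbot | htop
  · have : a = 1 := by
      have := Subgroup.mem_zpowers a
      rw [hbot, Subgroup.mem_bot] at this
      exact this
    simp [this]
  · have hb : b ∈ Subgroup.zpowers a := htop ▸ Subgroup.mem_top b
    obtain ⟨k, rfl⟩ := hb
    show a * a ^ k = a ^ k * a
    exact (Commute.refl a).zpow_right k

lemma subgroup_eq_bot_or_top_of_coatom {M : Subgroup G} (hM : IsCoatom M) [M.Normal]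
    (K : Subgroup (G ⧸ M)) : K = ⊥ ∨ K = ⊤ := by
  set π := QuotientGroup.mk' M
  have hMle : M ≤ Subgroup.comap π K := by
    have := Subgroup.ker_le_comap π K
    rwa [QuotientGroup.ker_mk'] at this
  have hKmap : Subgroup.map π (Subgroup.comap π K) = K :=
    Subgroup.map_comap_eq_self_of_surjective (QuotientGroup.mk'_surjective M) K
  rcases hMle.lt_or_eq with hlt | heq
  · right
    rw [← hKmap, hM.2 _ hlt]
    exact Subgroup.map_top_of_surjective π (QuotientGroup.mk'_surjective M)
  · left
    rw [← hKmap, ← heq]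
    rw [Subgroup.map_eq_bot_iff, QuotientGroup.ker_mk']

lemma frattini_subgroup_of_normal [Finite G] (hfr : frattini G = ⊥)
    (M : Subgroup G) [hMn : M.Normal] : frattini (↥M) = ⊥ := by
  set K := (frattini ↥M).map M.subtype with hKdef
  have hKM : K ≤ M := Subgroup.map_subtype_le _
  have hKnormal : K.Normal := by
    constructor
    intro k hk g
    obtain ⟨k', hk', rfl⟩ := hk
    have hfix : Subgroup.comap (MulAut.conjNormal g : ↥M ≃* ↥M).toMonoidHom (frattini ↥M)
        = frattini ↥M :=
      Subgroup.characteristic_iff_comap_eq.mp inferInstance _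
    have hmem : (MulAut.conjNormal g) k' ∈ frattini ↥M := by
      have h2 := hk'
      rw [← hfix] at h2
      exact Subgroup.mem_comap.mp h2
    exact ⟨(MulAut.conjNormal g) k', hmem, MulAut.conjNormal_apply g k'⟩
  by_contra hne
  have hKne : K ≠ ⊥ := fun hb =>
    hne (by rwa [Subgroup.map_eq_bot_iff, Subgroup.ker_subtype, le_bot_iff] at hb)
  have hKnle : ¬ K ≤ frattini G := by
    rw [hfr, le_bot_iff]; exact hKne
  obtain ⟨V, hV, hKV⟩ := exists_coatom_not_le hKnle
  have hsup : K ⊔ V = ⊤ := hV.2 (K ⊔ V) (right_lt_sup.mpr hKV)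
  have key : V.subgroupOf M ⊔ frattini ↥M = ⊤ := by
    rw [eq_top_iff]
    rintro ⟨m, hm⟩ -
    have hmKV : m ∈ (K : Set G) * (V : Set G) := by
      rw [← Subgroup.normal_mul K V, hsup]
      exact Subgroup.mem_top m
    obtain ⟨k, hk, v, hv, hkv⟩ := hmKV
    obtain ⟨y, hy, rfl⟩ := hk
    have hvM : v ∈ M := by
      have hveq : v = (M.subtype y)⁻¹ * m := by
        rw [← hkv]; group
      rw [hveq]
      exact M.mul_mem (M.inv_mem y.2) hm
    have hmeq : (⟨m, hm⟩ : ↥M) = y * ⟨v, hvM⟩ := by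
      apply Subtype.ext
      simp [← hkv]
    rw [hmeq]
    exact mul_mem (Subgroup.mem_sup_right hy)
      (Subgroup.mem_sup_left (show (⟨v, hvM⟩ : ↥M) ∈ V.subgroupOf M from hv))
  have hVtop : V.subgroupOf M = ⊤ := frattini_nongenerating key
  exact hKV (hKM.trans (Subgroup.subgroupOf_eq_top.mp hVtop))

end Aux2

section Aux3
universe u
variable {H : Type*} [Group H]

lemma sup_inf_eq_self' {N M₁ W : Subgroup H} [N.Normal]
    (hinf : N ⊓ M₁ = ⊥) (hW : W ≤ M₁) : (N ⊔ W) ⊓ M₁ = W := by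
  apply le_antisymm
  · intro x hx
    rw [Subgroup.mem_inf] at hx
    obtain ⟨hx1, hx2⟩ := hx
    rw [← SetLike.mem_coe, Subgroup.normal_mul] at hx1
    obtain ⟨a, ha, w, hw, rfl⟩ := hx1
    have haM : a ∈ M₁ := by
      have heq : a = (a * w) * w⁻¹ := by group
      rw [heq]
      exact M₁.mul_mem hx2 (M₁.inv_mem (hW hw))
    have hab : a ∈ N ⊓ M₁ := Subgroup.mem_inf.mpr ⟨ha, haM⟩
    rw [hinf, Subgroup.mem_bot] at hab
    simpa [hab] using hw
  · exact le_inf le_sup_right hW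

lemma sup_decomp' {N M₁ : Subgroup H} [N.Normal] (hsup : N ⊔ M₁ = ⊤)
    {T : Subgroup H} (hNT : N ≤ T) : N ⊔ (T ⊓ M₁) = T := by
  apply le_antisymm (sup_le hNT inf_le_left)
  intro t ht
  have htm : t ∈ (N : Set H) * (M₁ : Set H) := by
    rw [← Subgroup.normal_mul, hsup]
    exact Subgroup.mem_top t
  obtain ⟨a, ha, m, hm, rfl⟩ := htm
  have hmT : m ∈ T ⊓ M₁ := by
    refine Subgroup.mem_inf.mpr ⟨?_, hm⟩
    have heq : m = a⁻¹ * (a * m) := by group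
    rw [heq]
    exact T.mul_mem (T.inv_mem (hNT ha)) ht
  exact Subgroup.mul_mem _ (Subgroup.mem_sup_left ha) (Subgroup.mem_sup_right hmT)

lemma lemmaA : ∀ (n : ℕ) (H : Type u) [Group H] [Finite H], Nat.card H = n →
    ¬ Group.IsNilpotent H → frattini H = ⊥ →
    ∃ M : Subgroup H, IsCoatom M ∧ ¬ M.Normal ∧ ¬ socle' H ≤ M := by
  intro n
  induction n using Nat.strong_induction_on with
  | _ n IH =>
  intro H _ _ hcard hnil hfr
  have hnontriv : Nontrivial H := by
    rcases subsingleton_or_nontrivial H with hs | hn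
    · haveI := hs
      exact absurd (inferInstance : Group.IsNilpotent H) hnil
    · exact hn
  obtain ⟨N, hNmin⟩ := exists_isMinimalNormal (G := H)
  obtain ⟨hNnorm, hNbot, hNminimal⟩ := hNmin
  haveI := hNnorm
  have hNnle : ¬ N ≤ frattini H := by
    rw [hfr, le_bot_iff]; exact hNbot
  obtain ⟨M₁, hM₁, hNM₁⟩ := exists_coatom_not_le hNnle
  by_cases hM₁n : M₁.Normal
  swap
  · refine ⟨M₁, hM₁, hM₁n, fun hle => hNM₁ (le_trans ?_ hle)⟩
    exact le_sSup (show N ∈ {K : Subgroup H | IsMinimalNormal K} from ⟨hNnorm, hNbot, hNminimal⟩)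
  haveI := hM₁n
  have hinf : N ⊓ M₁ = ⊥ := by
    rcases hNminimal (N ⊓ M₁) (Subgroup.normal_inf_normal N M₁) inf_le_left with h | h
    · exact h
    · exact absurd (h ▸ inf_le_right) hNM₁
  have hdisj : Disjoint N M₁ := disjoint_iff.mpr hinf
  have hsup : N ⊔ M₁ = ⊤ := hM₁.2 _ (right_lt_sup.mpr hNM₁)
  have hcomm : ∀ x ∈ N, ∀ y ∈ M₁, Commute x y := fun x hx y hy =>
    Subgroup.commute_of_normal_of_disjoint N M₁ hNnorm hM₁n hdisj x y hx hy
  have hQsub : ∀ K : Subgroup (H ⧸ M₁), K = ⊥ ∨ K = ⊤ :=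
    subgroup_eq_bot_or_top_of_coatom hM₁
  have hQcomm := comm_of_subgroups_trivial hQsub
  -- N is abelian
  have hNab : ∀ a ∈ N, ∀ b ∈ N, a * b = b * a := by
    intro a ha b hb
    have hq : ((a * b : H) : H ⧸ M₁) = ((b * a : H) : H ⧸ M₁) := by
      rw [QuotientGroup.mk_mul, QuotientGroup.mk_mul]
      exact hQcomm _ _
    have hmem : (a * b)⁻¹ * (b * a) ∈ M₁ := QuotientGroup.eq.mp hq
    have hmemN : (a * b)⁻¹ * (b * a) ∈ N :=
      N.mul_mem (N.inv_mem (N.mul_mem ha hb)) (N.mul_mem hb ha)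
    have : (a * b)⁻¹ * (b * a) ∈ N ⊓ M₁ := Subgroup.mem_inf.mpr ⟨hmemN, hmem⟩
    rw [hinf, Subgroup.mem_bot, inv_mul_eq_one] at this
    exact this
  have hNcenter : N ≤ Subgroup.center H := by
    intro a ha
    rw [Subgroup.mem_center_iff]
    intro g
    have hg : g ∈ (N : Set H) * (M₁ : Set H) := by
      rw [← Subgroup.normal_mul, hsup]
      exact Subgroup.mem_top g
    obtain ⟨x, hx, y, hy, rfl⟩ := hg
    have c1 : Commute a x := hNab a ha x hx
    have c2 : Commute a y := hcomm a ha y hy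
    exact (c1.mul_right c2).symm
  -- M₁ is not nilpotent
  have hM₁nonnil : ¬ Group.IsNilpotent ↥M₁ := by
    intro hnilM₁
    apply hnil
    have hgsurj : Function.Surjective ((QuotientGroup.mk' N).comp M₁.subtype) := by
      intro q
      obtain ⟨h, rfl⟩ := QuotientGroup.mk'_surjective N q
      have hh : h ∈ (N : Set H) * (M₁ : Set H) := by
        rw [← Subgroup.normal_mul, hsup]
        exact Subgroup.mem_top h
      obtain ⟨x, hx, y, hy, rfl⟩ := hh
      refine ⟨⟨y, hy⟩, ?_⟩
      show ((y : H) : H ⧸ N) = ((x * y : H) : H ⧸ N)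
      rw [QuotientGroup.eq]
      have heq : y⁻¹ * (x * y) = y⁻¹ * x * y := by group
      rw [heq]
      exact hNnorm.conj_mem' x hx y
    have h1 : Group.IsNilpotent (H ⧸ N) := nilpotent_of_surjective _ hgsurj
    haveI := h1
    exact isNilpotent_of_ker_le_center (QuotientGroup.mk' N)
      (by rw [QuotientGroup.ker_mk']; exact hNcenter)
  have hfrM₁ : frattini ↥M₁ = ⊥ := frattini_subgroup_of_normal hfr M₁
  have hcardlt : Nat.card ↥M₁ < n := by
    rw [← hcard]
    by_contra hc
    push_neg at hc
    exact hM₁.1 (M₁.eq_top_of_le_card hc)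
  obtain ⟨W', hW'coatom, hW'nn, hW's⟩ := IH _ hcardlt ↥M₁ rfl hM₁nonnil hfrM₁
  set W := W'.map M₁.subtype with hWdef
  have hWM₁ : W ≤ M₁ := Subgroup.map_subtype_le _
  have hW'eq : W.subgroupOf M₁ = W' :=
    Subgroup.comap_map_eq_self_of_injective (Subgroup.subtype_injective M₁) W'
  obtain ⟨S', hS'min, hS'nle⟩ : ∃ S', IsMinimalNormal S' ∧ ¬ S' ≤ W' := by
    by_contra hc
    push_neg at hc
    exact hW's (sSup_le fun S hS => hc S hS)
  obtain ⟨hS'norm, hS'bot, hS'minimal⟩ := hS'min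
  set S := S'.map M₁.subtype with hSdef
  have hSM₁ : S ≤ M₁ := Subgroup.map_subtype_le _
  have hS'eq : S.subgroupOf M₁ = S' :=
    Subgroup.comap_map_eq_self_of_injective (Subgroup.subtype_injective M₁) S'
  set V := N ⊔ W with hVdef
  have hVinf : V ⊓ M₁ = W := sup_inf_eq_self' hinf hWM₁
  have hVne : V ≠ ⊤ := by
    intro htop
    apply hW'coatom.1
    have hM₁W : M₁ = W := by rw [← hVinf, htop, top_inf_eq]
    rw [eq_top_iff]
    rintro ⟨m, hm⟩ -
    have hmW : m ∈ W := hM₁W ▸ hm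
    obtain ⟨w', hw', hww⟩ := hmW
    have heq : (⟨m, hm⟩ : ↥M₁) = w' := Subtype.ext hww.symm
    rw [heq]
    exact hw'
  have hVcoatom : IsCoatom V := by
    refine ⟨hVne, fun T hVT => ?_⟩
    have hNT : N ≤ T := le_trans le_sup_left hVT.le
    have hTdecomp : N ⊔ (T ⊓ M₁) = T := sup_decomp' hsup hNT
    have hWT : W ≤ T ⊓ M₁ := le_inf (le_sup_right.trans hVT.le) hWM₁
    have hW'le : W' ≤ (T ⊓ M₁).subgroupOf M₁ := by
      rw [← hW'eq]
      exact Subgroup.comap_mono hWT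
    rcases hW'le.lt_or_eq with hlt | heq
    · have htop : (T ⊓ M₁).subgroupOf M₁ = ⊤ := hW'coatom.2 _ hlt
      have hM₁T : M₁ ≤ T ⊓ M₁ := Subgroup.subgroupOf_eq_top.mp htop
      have : T ⊓ M₁ = M₁ := le_antisymm inf_le_right hM₁T
      rw [← hTdecomp, this, hsup]
    · exfalso
      apply hVT.ne
      have h2 := congrArg (Subgroup.map M₁.subtype) heq
      rw [Subgroup.subgroupOf_map_subtype,
        inf_eq_left.mpr (inf_le_right : T ⊓ M₁ ≤ M₁)] at h2
      rw [hVdef, hWdef, h2]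
      exact hTdecomp
  have hVnn : ¬ V.Normal := by
    intro hVnorm
    apply hW'nn
    rw [← hW'eq]
    constructor
    intro w hw g
    rw [Subgroup.mem_subgroupOf] at hw ⊢
    have hco : ((g * w * g⁻¹ : ↥M₁) : H) = (g : H) * (w : H) * (g : H)⁻¹ := by
      push_cast; rfl
    rw [hco]
    have h1 : (g : H) * (w : H) * (g : H)⁻¹ ∈ V :=
      hVnorm.conj_mem _ (Subgroup.mem_sup_right hw) (g : H)
    have h2 : (g : H) * (w : H) * (g : H)⁻¹ ∈ M₁ :=
      M₁.mul_mem (M₁.mul_mem g.2 (hWM₁ hw)) (M₁.inv_mem g.2)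
    have h3 : (g : H) * (w : H) * (g : H)⁻¹ ∈ V ⊓ M₁ := Subgroup.mem_inf.mpr ⟨h1, h2⟩
    rwa [hVinf] at h3
  have hSnorm : S.Normal := by
    constructor
    intro s hs g
    have hg : g ∈ (N : Set H) * (M₁ : Set H) := by
      rw [← Subgroup.normal_mul, hsup]
      exact Subgroup.mem_top g
    obtain ⟨a, ha, m, hm, rfl⟩ := hg
    have hsM : s ∈ M₁ := hSM₁ hs
    have hms : m * s * m⁻¹ ∈ S := by
      have hsS' : (⟨s, hsM⟩ : ↥M₁) ∈ S' := by
        rw [← hS'eq, Subgroup.mem_subgroupOf]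
        exact hs
      have hmem : (⟨m, hm⟩ : ↥M₁) * ⟨s, hsM⟩ * (⟨m, hm⟩ : ↥M₁)⁻¹ ∈ S' :=
        hS'norm.conj_mem _ hsS' _
      refine Subgroup.mem_map.mpr ⟨_, hmem, ?_⟩
      push_cast; rfl
    have hac := Subgroup.mem_center_iff.mp (hNcenter ha)
    have heq : (a * m) * s * (a * m)⁻¹ = m * s * m⁻¹ := by
      rw [mul_inv_rev]
      calc a * m * s * (m⁻¹ * a⁻¹) = a * (m * s * m⁻¹) * a⁻¹ := by group
        _ = ((m * s * m⁻¹) * a) * a⁻¹ := by rw [hac (m * s * m⁻¹)]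
        _ = m * s * m⁻¹ := by group
    rw [heq]
    exact hms
  have hSbot : S ≠ ⊥ := fun hb =>
    hS'bot (by rwa [hSdef, Subgroup.map_eq_bot_iff, Subgroup.ker_subtype, le_bot_iff] at hb)
  have hSminimal : ∀ K : Subgroup H, K.Normal → K ≤ S → K = ⊥ ∨ K = S := by
    intro K hKnorm hKS
    have hKM₁ : K ≤ M₁ := hKS.trans hSM₁
    have hK'norm : (K.subgroupOf M₁).Normal := by
      constructor
      intro k hk g
      rw [Subgroup.mem_subgroupOf] at hk ⊢
      have hco : ((g * k * g⁻¹ : ↥M₁) : H) = (g : H) * (k : H) * (g : H)⁻¹ := by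
        push_cast; rfl
      rw [hco]
      exact hKnorm.conj_mem _ hk (g : H)
    have hK'S' : K.subgroupOf M₁ ≤ S' := by
      rw [← hS'eq]
      exact Subgroup.comap_mono hKS
    have hmapK : (K.subgroupOf M₁).map M₁.subtype = K := by
      rw [Subgroup.subgroupOf_map_subtype, inf_eq_left.mpr hKM₁]
    rcases hS'minimal _ hK'norm hK'S' with h | h
    · left
      rw [← hmapK, h, Subgroup.map_bot]
    · right
      rw [← hmapK, h, hSdef]
  have hSsoc : S ≤ socle' H :=
    le_sSup (show S ∈ {K : Subgroup H | IsMinimalNormal K} from ⟨hSnorm, hSbot, hSminimal⟩)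
  have hSnleV : ¬ S ≤ V := by
    intro hle
    apply hS'nle
    rw [← hS'eq, ← hW'eq]
    apply Subgroup.comap_mono
    rw [← hVinf]
    exact le_inf hle hSM₁
  exact ⟨V, hVcoatom, hVnn, fun hle => hSnleV (hSsoc.trans hle)⟩
end Aux3

section Main
variable {G : Type*} [Group G]

lemma comap_map_mk'_eq {M : Subgroup G} (hfr : frattini G ≤ M) :
    Subgroup.comap (QuotientGroup.mk' (frattini G))
      (Subgroup.map (QuotientGroup.mk' (frattini G)) M) = M := by
  rw [Subgroup.comap_map_eq, QuotientGroup.ker_mk']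
  exact sup_eq_left.mpr hfr

lemma isCoatom_map_mk' {M : Subgroup G} (hM : IsCoatom M) :
    IsCoatom (M.map (QuotientGroup.mk' (frattini G))) := by
  set π := QuotientGroup.mk' (frattini G)
  have hsurj : Function.Surjective π := QuotientGroup.mk'_surjective _
  have hcm : Subgroup.comap π (Subgroup.map π M) = M :=
    comap_map_mk'_eq (frattini_le_coatom hM)
  constructor
  · intro htop
    apply hM.1
    rw [← hcm, htop, Subgroup.comap_top]
  · intro T hT
    have h1 : M < Subgroup.comap π T := by
      rw [← hcm]
      exact (Subgroup.comap_lt_comap_of_surjective hsurj).mpr hT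
    have h2 : Subgroup.comap π T = ⊤ := hM.2 _ h1
    rw [← Subgroup.map_comap_eq_self_of_surjective hsurj T, h2]
    exact Subgroup.map_top_of_surjective π hsurj

lemma frattini_quotient_frattini_eq_bot (G : Type*) [Group G] [Finite G] :
    frattini (G ⧸ frattini G) = ⊥ := by
  set π := QuotientGroup.mk' (frattini G)
  have hsurj : Function.Surjective π := QuotientGroup.mk'_surjective _
  have hle : Subgroup.comap π (frattini (G ⧸ frattini G)) ≤ frattini G := by
    show _ ≤ Order.radical (Subgroup G)
    unfold Order.radical
    refine le_iInf₂ fun M hM => ?_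
    have h1 : frattini (G ⧸ frattini G) ≤ Subgroup.map π M :=
      frattini_le_coatom (isCoatom_map_mk' hM)
    have h2 := Subgroup.comap_mono (f := π) h1
    rwa [comap_map_mk'_eq (frattini_le_coatom hM)] at h2
  have h3 := Subgroup.map_mono (f := π) hle
  rw [Subgroup.map_comap_eq_self_of_surjective hsurj] at h3
  have h4 : Subgroup.map π (frattini G) = ⊥ := by
    rw [Subgroup.map_eq_bot_iff, QuotientGroup.ker_mk']
  rw [h4, le_bot_iff] at h3
  exact h3

end Main


theorem exists_abnormal_maximal_not_containing_ftilde
    (G : Type*) [Group G] [Finite G] (h : ¬ Group.IsNilpotent G) :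
    ∃ M : Subgroup G, IsCoatom M ∧ IsAbnormal M ∧ ¬ Ftilde G ≤ M := by
  set π := QuotientGroup.mk' (frattini G) with hπ
  have hsurj : Function.Surjective π := QuotientGroup.mk'_surjective _
  have hfrQ : frattini (G ⧸ frattini G) = ⊥ := frattini_quotient_frattini_eq_bot G
  have hQnn : ¬ Group.IsNilpotent (G ⧸ frattini G) := by
    intro hQ
    apply h
    have q := (isNilpotent_of_finite_tfae (G := G)).out 0 2
    rw [q]
    intro M hM
    have q2 := (isNilpotent_of_finite_tfae (G := G ⧸ frattini G)).out 0 2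
    have h2 := (q2.mp hQ) (Subgroup.map π M) (isCoatom_map_mk' hM)
    have h3 := h2.comap π
    rwa [comap_map_mk'_eq (frattini_le_coatom hM)] at h3
  obtain ⟨M', hM'coatom, hM'nn, hM'soc⟩ :=
    lemmaA (Nat.card (G ⧸ frattini G)) (G ⧸ frattini G) rfl hQnn hfrQ
  refine ⟨Subgroup.comap π M', Subgroup.isCoatom_comap_of_surjective hsurj hM'coatom, ?_, ?_⟩
  · apply isAbnormal_of_coatom_not_normal (Subgroup.isCoatom_comap_of_surjective hsurj hM'coatom)
    intro hnorm
    apply hM'nn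
    have h5 := hnorm.map π hsurj
    rwa [Subgroup.map_comap_eq_self_of_surjective hsurj] at h5
  · intro hle
    apply hM'soc
    have h2 : Subgroup.map π (Subgroup.comap π (socle' (G ⧸ frattini G)))
        ≤ Subgroup.map π (Subgroup.comap π M') := Subgroup.map_mono hle
    rwa [Subgroup.map_comap_eq_self_of_surjective hsurj,
      Subgroup.map_comap_eq_self_of_surjective hsurj] at h2
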